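/- Let G be a locally compact Hausdorff abelian topological group and η : G → ℂ positive definite with η(0) > 0. Assume that Δ := {z ∈ G : η(z) ≠ 0} is closed and discrete in G and that P_ε is relatively dense in G for every ε > 0. Then for every ε with 0 < ε < 1, the set P_ε is totally bounded with respect to the pseudometric ρ: for every δ > 0 there exists a finite set F ⊆ G such that P_ε ⊆ P_δ + F. -/

import Mathlib

open scoped Pointwise

/-- A function `η : G → ℂ` on an additive abelian group is positive definite if all the
finite double sums `∑ i, ∑ j, c i * conj (c j) * η (x i - x j)` are nonnegative reals. -/
def IsPositiveDefiniteFn {G : Type*} [AddCommGroup G] (η : G → ℂ) : Prop :=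
  ∀ (N : ℕ) (x : Fin N → G) (c : Fin N → ℂ),
    ∃ r : ℝ, 0 ≤ r ∧ ∑ i, ∑ j, c i * (starRingEnd ℂ) (c j) * η (x i - x j) = (r : ℂ)

/-- The autocorrelation pseudometric `ρ(s,t) = |1 − η(s−t)/η(0)|^{1/2}`. -/
noncomputable def acRho {G : Type*} [AddCommGroup G] (η : G → ℂ) (s t : G) : ℝ :=
  Real.sqrt ‖1 - η (s - t) / η 0‖

/-- The set of `ε`-almost periods `P_ε = {t : ρ(t,0) < ε}`. -/
noncomputable def almostPeriods {G : Type*} [AddCommGroup G] (η : G → ℂ) (ε : ℝ) : Set G :=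
  {t : G | acRho η t 0 < ε}

/-- A subset `P` of a topological abelian group is relatively dense if `P + K = G`
for some compact `K`. -/
def RelativelyDense {G : Type*} [AddCommGroup G] [TopologicalSpace G] (P : Set G) : Prop :=
  ∃ K : Set G, IsCompact K ∧ P + K = Set.univ

section AuxPD
variable {G : Type*} [AddCommGroup G] {η : G → ℂ}

lemma eta_zero_real (hpd : IsPositiveDefiniteFn η) : η 0 = ((η 0).re : ℂ) := by
  obtain ⟨r, hr, h⟩ := hpd 1 (fun _ => 0) (fun _ => 1)
  simp [Fin.sum_univ_one] at h
  rw [h]; simp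

lemma eta_neg (hpd : IsPositiveDefiniteFn η) (x : G) :
    η (-x) = (starRingEnd ℂ) (η x) := by
  obtain ⟨r1, _, h1⟩ := hpd 2 ![0, x] ![1, 1]
  obtain ⟨r2, _, h2⟩ := hpd 2 ![0, x] ![1, Complex.I]
  have h0 := eta_zero_real hpd
  simp only [Fin.sum_univ_two, Matrix.cons_val_zero, Matrix.cons_val_one, Matrix.head_cons,
    sub_self, zero_sub, sub_zero, map_one, one_mul, mul_one, Complex.conj_I] at h1 h2
  have i1 := congrArg Complex.im h1
  have i2 := congrArg Complex.im h2
  rw [h0] at i1 i2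
  simp [Complex.add_im, Complex.mul_im, Complex.I_re, Complex.I_im] at i1 i2
  apply Complex.ext <;> simp [Complex.conj_re, Complex.conj_im] <;> linarith

lemma key3 (hpd : IsPositiveDefiniteFn η) (x y : G) (μ : ℝ) (l : ℂ) :
    0 ≤ μ^2 * (η 0).re + 2 * Complex.normSq l * ((η 0).re - (η (x-y)).re)
      + 2*μ*(l * (η x - η y)).re := by
  obtain ⟨r, hr, h⟩ := hpd 3 ![0, x, y] ![(μ:ℂ), l, -l]
  have h0 := eta_zero_real hpd
  have hnx := eta_neg hpd x
  have hny := eta_neg hpd y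
  have hnxy : η (y - x) = (starRingEnd ℂ) (η (x - y)) := by
    rw [← neg_sub x y, eta_neg hpd]
  simp only [Fin.sum_univ_three, Matrix.cons_val_zero, Matrix.cons_val_one, Matrix.head_cons,
    Matrix.cons_val_two, Matrix.tail_cons, sub_self, zero_sub, sub_zero, map_neg] at h
  rw [hnx, hny, hnxy, h0] at h
  have hre := congrArg Complex.re h
  simp only [Complex.add_re, Complex.mul_re, Complex.sub_re, Complex.sub_im, Complex.mul_im,
    Complex.conj_re, Complex.conj_im, Complex.ofReal_re, Complex.ofReal_im, Complex.neg_re,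
    Complex.neg_im, Complex.normSq_apply] at hre ⊢
  nlinarith [hre, hr]

lemma krein (hpd : IsPositiveDefiniteFn η) (hη0 : 0 < (η 0).re) (x y : G) :
    ‖η x - η y‖ ^ 2 ≤ 2 * (η 0).re * ((η 0).re - (η (x-y)).re) := by
  have hAD : 0 ≤ (η 0).re - (η (x-y)).re := by
    have := key3 hpd x y 0 1
    simpa using this
  by_cases hB : η x = η y
  · simp [hB]; positivity
  · set B := η x - η y with hBdef
    have hB0 : B ≠ 0 := sub_ne_zero.mpr hB
    have habs : (0:ℝ) < ‖B‖ := norm_pos_iff.mpr hB0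
    set l : ℂ := -(starRingEnd ℂ) B / (‖B‖ : ℂ) with hl
    have hnl : Complex.normSq l = 1 := by
      rw [hl, Complex.normSq_div]
      simp [Complex.normSq_conj, Complex.normSq_ofReal, Complex.normSq_eq_norm_sq]
      exact hB0
    have hlB' : l * B = ((-‖B‖ : ℝ) : ℂ) := by
      rw [hl, div_mul_eq_mul_div, neg_mul, mul_comm ((starRingEnd ℂ) B) B,
        Complex.mul_conj, Complex.normSq_eq_norm_sq]
      push_cast
      rw [div_eq_iff (by exact_mod_cast habs.ne' : (‖B‖ : ℂ) ≠ 0)]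
      ring
    have hlB : (l * B).re = -‖B‖ := by rw [hlB']; simp
    have hk := key3 hpd x y (‖B‖ / (η 0).re) l
    rw [hnl, hlB] at hk
    have h2 : (‖B‖ / (η 0).re)^2 * (η 0).re
        = ‖B‖ ^2 / (η 0).re := by field_simp
    rw [h2] at hk
    have h3 : ‖B‖ ^2 / (η 0).re ≤ 2 * ((η 0).re - (η (x-y)).re) := by
      have hring : ‖B‖ ^ 2 / (η 0).re + 2 * 1 * ((η 0).re - (η (x - y)).re)
          + 2 * (‖B‖ / (η 0).re) * -‖B‖
          = 2 * ((η 0).re - (η (x - y)).re) - ‖B‖ ^2 / (η 0).re := by ring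
      linarith [hk, hring]
    rw [div_le_iff₀ hη0] at h3
    linarith [h3]

end AuxPD

lemma mem_almostPeriods_iff {G : Type*} [AddCommGroup G] (η : G → ℂ) {ε : ℝ} (hε : 0 < ε)
    (t : G) : t ∈ almostPeriods η ε ↔ ‖1 - η t / η 0‖ < ε ^ 2 := by
  rw [almostPeriods, Set.mem_setOf_eq, acRho, sub_zero, Real.sqrt_lt' hε]

/-- If the support `Δ` of a positive definite `η` (with `η(0) > 0`) is closed and discrete
and all `P_ε` are relatively dense, then for `0 < ε < 1` the set `P_ε` is totally bounded
in the autocorrelation pseudometric: it is covered by finitely many translates of any `P_δ`. -/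
theorem almostPeriods_totallyBounded {G : Type*} [AddCommGroup G] [TopologicalSpace G]
    [IsTopologicalAddGroup G] [LocallyCompactSpace G] [T2Space G] (η : G → ℂ)
    (hpd : IsPositiveDefiniteFn η) (hη0 : 0 < (η 0).re)
    (hclosed : IsClosed {z : G | η z ≠ 0}) (hdiscrete : DiscreteTopology {z : G | η z ≠ 0})
    (hdense : ∀ ε : ℝ, 0 < ε → RelativelyDense (almostPeriods η ε)) :
    ∀ ε : ℝ, 0 < ε → ε < 1 → ∀ δ : ℝ, 0 < δ →
      ∃ F : Finset G, almostPeriods η ε ⊆ almostPeriods η δ + (F : Set G) := by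
  intro ε hε hε1 δ hδ
  set A := (η 0).re with hA
  have h0 : η 0 = (A : ℂ) := eta_zero_real hpd
  have hε2 : 0 < 1 - ε ^ 2 := by nlinarith
  set δ' : ℝ := min δ ((1 - ε ^ 2) / 2) with hδ'def
  have hδ'pos : 0 < δ' := lt_min hδ (by linarith)
  have hδ'le : δ' ≤ δ := min_le_left _ _
  have hδ'le2 : δ' ≤ (1 - ε ^ 2) / 2 := min_le_right _ _
  obtain ⟨K, hK, hPK⟩ := hdense δ' hδ'pos
  have hfin : ({z : G | η z ≠ 0} ∩ K).Finite := by
    have hcpt : IsCompact ({z : G | η z ≠ 0} ∩ K) := hK.inter_left hclosed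
    have hdisc : DiscreteTopology ({z : G | η z ≠ 0} ∩ K : Set G) :=
      DiscreteTopology.of_subset hdiscrete Set.inter_subset_left
    exact hcpt.finite (isDiscrete_iff_discreteTopology.mpr hdisc)
  refine ⟨hfin.toFinset, fun t ht => ?_⟩
  have htK : t ∈ almostPeriods η δ' + K := by rw [hPK]; trivial
  obtain ⟨p, hp, k, hk, hpk⟩ := Set.mem_add.mp htK
  -- key claim: η k ≠ 0
  have hkt : k = t - p := by rw [← hpk]; abel
  have ht' : ‖1 - η t / η 0‖ < ε ^ 2 := (mem_almostPeriods_iff η hε t).mp ht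
  have hp' : ‖1 - η p / η 0‖ < δ' ^ 2 := (mem_almostPeriods_iff η hδ'pos p).mp hp
  -- |η t| > A (1 - ε²)
  have habs0 : ‖η 0‖ = A := by rw [h0]; simp [abs_of_pos hη0]
  have hηt : A * (1 - ε ^ 2) < ‖η t‖ := by
    have h1 : (1 : ℝ) - ‖η t / η 0‖ ≤ ‖1 - η t / η 0‖ := by
      calc (1:ℝ) - ‖η t / η 0‖
          = ‖(1:ℂ)‖ - ‖η t / η 0‖ := by simp
        _ ≤ ‖1 - η t / η 0‖ := by
            exact norm_sub_norm_le _ _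
    have h2 : ‖η t / η 0‖ = ‖η t‖ / A := by
      rw [norm_div, habs0]
    have h3 : 1 - ε ^ 2 < ‖η t‖ / A := by nlinarith [h1, h2, ht']
    have h4 := (lt_div_iff₀ hη0).mp h3
    nlinarith [h4]
  -- Re bound for p
  have hRe : A - (η p).re < A * δ' ^ 2 := by
    have hre1 : (1 - η p / η 0).re ≤ ‖1 - η p / η 0‖ := Complex.re_le_norm _
    have hre2 : (1 - η p / η 0).re = 1 - (η p).re / A := by
      rw [h0]
      simp [Complex.sub_re, Complex.div_ofReal_re]
    have hre3 : 1 - (η p).re / A < δ' ^ 2 := by rw [← hre2]; linarith [hre1, hp']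
    have := mul_lt_mul_of_pos_left hre3 hη0
    have hcancel : A * ((η p).re / A) = (η p).re := by field_simp
    nlinarith [this, hcancel]
  -- Krein bound
  have hkt' : k - t = -p := by rw [hkt]; abel
  have hkr : ‖η k - η t‖ ^ 2 ≤ 2 * A * (A - (η p).re) := by
    have := krein hpd hη0 k t
    rw [hkt', eta_neg hpd] at this
    simpa using this
  -- η k ≠ 0
  have hknz : η k ≠ 0 := by
    intro hk0
    have htri : ‖η t‖ ≤ ‖η k - η t‖ := by
      rw [hk0, zero_sub, norm_neg]
    have hsq : δ' ^ 2 ≤ ((1 - ε ^ 2) / 2) ^ 2 := pow_le_pow_left₀ hδ'pos.le hδ'le2 2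
    have htri2 : ‖η t‖ ^ 2 ≤ ‖η k - η t‖ ^ 2 :=
      pow_le_pow_left₀ (norm_nonneg _) htri 2
    have h6 : 2 * A * (A - (η p).re) < 2 * A * (A * δ' ^ 2) := by nlinarith [hRe, hη0]
    have h7 : 2 * (A * A) * δ' ^ 2 ≤ 2 * (A * A) * ((1 - ε ^ 2) / 2) ^ 2 :=
      mul_le_mul_of_nonneg_left hsq (by positivity)
    have h8 : (A * (1 - ε ^ 2)) ^ 2 < ‖η t‖ ^ 2 := by
      nlinarith [hηt, mul_pos hη0 hε2]
    linarith [htri2, hkr, h6, h7, h8, sq_nonneg (A * (1 - ε ^ 2))]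
  -- conclude
  refine Set.mem_add.mpr ⟨p, ?_, k, ?_, hpk⟩
  · rw [mem_almostPeriods_iff η hδ]
    calc ‖1 - η p / η 0‖ < δ' ^ 2 := hp'
      _ ≤ δ ^ 2 := pow_le_pow_left₀ hδ'pos.le hδ'le 2
  · simp only [Finset.mem_coe, Set.Finite.mem_toFinset]
    exact ⟨hknz, hk⟩
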